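/- For any finite simple graph G and injective f: V → ℝ, 2·∑_v i_f(v) = 2·v_0 − ∑_v (χ(S_f^+(v)) + χ(S_f^-(v))), where the summand combination is symmetric under replacing f by −f. -/
import Mathlib


open Finset

attribute [local instance] Classical.propDecidable

variable {V : Type*}

/-- Number of complete subgraphs `K_k` of `G` whose vertex set lies inside `A`. -/
noncomputable def cliquesIn [Fintype V] (G : SimpleGraph V) (k : ℕ) (A : Finset V) : ℕ :=
  ((G.cliqueFinset k).filter (fun s => s ⊆ A)).card

/-- Euler characteristic of the subgraph of `G` induced on `A`. -/
noncomputable def eulerCharOn [Fintype V] (G : SimpleGraph V) (A : Finset V) : ℤ :=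
  ∑ k ∈ Finset.range (Fintype.card V + 1), (-1 : ℤ) ^ k * (cliquesIn G (k + 1) A : ℤ)

/-- Euler characteristic of `G`. -/
noncomputable def eulerChar [Fintype V] (G : SimpleGraph V) : ℤ :=
  eulerCharOn G Finset.univ

/-- Curvature of `G` at `v`. -/
noncomputable def curvature [Fintype V] (G : SimpleGraph V) (v : V) : ℚ :=
  ∑ k ∈ Finset.range (Fintype.card V + 1),
    (-1 : ℚ) ^ k * (cliquesIn G k (G.neighborFinset v) : ℚ) / (k + 1)

/-- Exit set: neighbors of `v` with smaller `f`-value. -/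
noncomputable def exitSet [Fintype V] (G : SimpleGraph V) (f : V → ℝ) (v : V) : Finset V :=
  (G.neighborFinset v).filter (fun w => f w < f v)

/-- Entrance set: neighbors of `v` with larger `f`-value. -/
noncomputable def enterSet [Fintype V] (G : SimpleGraph V) (f : V → ℝ) (v : V) : Finset V :=
  (G.neighborFinset v).filter (fun w => f v < f w)

/-- Poincaré–Hopf index of `f` at `v`. -/
noncomputable def indexOf [Fintype V] (G : SimpleGraph V) (f : V → ℝ) (v : V) : ℤ :=
  1 - eulerCharOn G (exitSet G f v)

lemma key [Fintype V] (G : SimpleGraph V) (f : V → ℝ) (hf : Function.Injective f) (m : ℕ) :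
    ∑ v : V, cliquesIn G (m + 1) (exitSet G f v) = (G.cliqueFinset (m + 2)).card := by
  classical
  rw [show (∑ v : V, cliquesIn G (m + 1) (exitSet G f v)) =
      ((Finset.univ.sigma fun v : V =>
        (G.cliqueFinset (m + 1)).filter (fun s => s ⊆ exitSet G f v)).card) by
    rw [Finset.card_sigma]; rfl]
  apply Finset.card_bij (fun p _ => insert p.1 p.2)
  · rintro ⟨v, s⟩ hp
    simp only [Finset.mem_sigma, Finset.mem_filter, SimpleGraph.mem_cliqueFinset_iff] at hp
    obtain ⟨-, hs, hsub⟩ := hp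
    have hvs : v ∉ s := by
      intro hv
      have := hsub hv
      simp [exitSet] at this
    rw [SimpleGraph.mem_cliqueFinset_iff]
    refine ⟨?_, ?_⟩
    · rw [Finset.coe_insert]
      refine hs.isClique.insert ?_
      intro b hb _
      have := hsub hb
      simp only [exitSet, Finset.mem_filter, SimpleGraph.mem_neighborFinset] at this
      exact this.1
    · rw [Finset.card_insert_of_notMem hvs, hs.2]
  · rintro ⟨v, s⟩ hp ⟨v', s'⟩ hp' heq
    simp only [Finset.mem_sigma, Finset.mem_filter, SimpleGraph.mem_cliqueFinset_iff] at hp hp'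
    obtain ⟨-, hs, hsub⟩ := hp
    obtain ⟨-, hs', hsub'⟩ := hp'
    have hmax : ∀ w ∈ s, f w < f v := by
      intro w hw; have := hsub hw; simp [exitSet] at this; exact this.2
    have hmax' : ∀ w ∈ s', f w < f v' := by
      intro w hw; have := hsub' hw; simp [exitSet] at this; exact this.2
    have hvv : v = v' := by
      have h1 : v' ∈ insert v s := by rw [heq]; exact Finset.mem_insert_self _ _
      have h2 : v ∈ insert v' s' := by rw [← heq]; exact Finset.mem_insert_self _ _
      rcases Finset.mem_insert.1 h1 with h | h
      · exact h.symm
      · rcases Finset.mem_insert.1 h2 with h' | h'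
        · exact h'
        · exact absurd (hmax _ h) (not_lt.2 (hmax' _ h').le)
    subst hvv
    have hvs : v ∉ s := fun hv => lt_irrefl _ (hmax _ hv)
    have hvs' : v ∉ s' := fun hv => lt_irrefl _ (hmax' _ hv)
    have : s = s' := by
      have := congrArg (fun t => Finset.erase t v) heq
      simpa [Finset.erase_insert hvs, Finset.erase_insert hvs'] using this
    simp [this]
  · intro t ht
    rw [SimpleGraph.mem_cliqueFinset_iff] at ht
    have hne : t.Nonempty := by
      rw [← Finset.card_pos, ht.2]; omega
    obtain ⟨v, hv, hmax⟩ := Finset.exists_max_image t f hne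
    refine ⟨⟨v, t.erase v⟩, ?_, ?_⟩
    · simp only [Finset.mem_sigma, Finset.mem_filter, SimpleGraph.mem_cliqueFinset_iff]
      refine ⟨Finset.mem_univ _, ⟨ht.1.subset (by simp [Finset.erase_subset]), ?_⟩, ?_⟩
      · rw [Finset.card_erase_of_mem hv, ht.2]; omega
      · intro w hw
        rw [Finset.mem_erase] at hw
        simp only [exitSet, Finset.mem_filter, SimpleGraph.mem_neighborFinset]
        refine ⟨(ht.1 hw.2 hv hw.1).symm, ?_⟩
        exact lt_of_le_of_ne (hmax _ hw.2) (fun h => hw.1 (hf h))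
    · exact Finset.insert_erase hv

lemma key' [Fintype V] (G : SimpleGraph V) (f : V → ℝ) (hf : Function.Injective f) (m : ℕ) :
    ∑ v : V, cliquesIn G (m + 1) (enterSet G f v) = (G.cliqueFinset (m + 2)).card := by
  have h : ∀ v, enterSet G f v = exitSet G (fun w => -f w) v := by
    intro v
    unfold enterSet exitSet
    apply Finset.filter_congr
    intro w _
    simp [neg_lt_neg_iff]
  simp_rw [h]
  exact key G (fun w => -f w) (fun a b hab => hf (by simpa using neg_injective hab)) m

lemma sum_euler_eq [Fintype V] (G : SimpleGraph V) (f : V → ℝ) (hf : Function.Injective f) :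
    ∑ v : V, eulerCharOn G (enterSet G f v) = ∑ v : V, eulerCharOn G (exitSet G f v) := by
  unfold eulerCharOn
  rw [Finset.sum_comm, Finset.sum_comm (s := Finset.univ)]
  apply Finset.sum_congr rfl
  intro k _
  rw [← Finset.mul_sum, ← Finset.mul_sum, ← Nat.cast_sum, ← Nat.cast_sum,
    key G f hf k, key' G f hf k]

/-- For any finite simple graph `G` and injective `f : V → ℝ`,
`2 ∑_v i_f(v) = 2 v_0 - ∑_v (χ(S_f^+(v)) + χ(S_f^-(v)))`. -/
theorem index_sum_doubled [Fintype V] (G : SimpleGraph V) (f : V → ℝ)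
    (hf : Function.Injective f) :
    2 * ∑ v : V, indexOf G f v =
      2 * (Fintype.card V : ℤ)
        - ∑ v : V, (eulerCharOn G (enterSet G f v) + eulerCharOn G (exitSet G f v)) := by
  unfold indexOf
  rw [Finset.sum_sub_distrib, Finset.sum_add_distrib, sum_euler_eq G f hf]
  simp [Finset.card_univ]
  ring
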